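/- Let A be a d × d real matrix with |det A| ≥ δ > 0, and let Δ be a d × d real matrix with d · ‖Δ‖ · (‖A‖ + ‖Δ‖)^{d−1} < δ. Then det(A + Δ) has the same sign as det(A): sign(det(A + Δ)) = sign(det A). -/

import Mathlib

open Finset

/-- Hadamard-type bound: the determinant with respect to the standard orthonormal basis of
Euclidean space is bounded by the product of the norms. -/
lemma stmt7_hadamard {d : ℕ} (v : Fin d → EuclideanSpace ℝ (Fin d)) :
    |(EuclideanSpace.basisFun (Fin d) ℝ).toBasis.det v| ≤ ∏ i, ‖v i‖ := by
  haveI : Fact (Module.finrank ℝ (EuclideanSpace ℝ (Fin d)) = d) := ⟨finrank_euclideanSpace_fin⟩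
  let o : Orientation ℝ (EuclideanSpace ℝ (Fin d)) (Fin d) :=
    (EuclideanSpace.basisFun (Fin d) ℝ).toBasis.orientation
  calc |(EuclideanSpace.basisFun (Fin d) ℝ).toBasis.det v|
      = |o.volumeForm v| := (o.volumeForm_robust' (EuclideanSpace.basisFun (Fin d) ℝ) v).symm
    _ ≤ ∏ i, ‖v i‖ := o.abs_volumeForm_apply_le v

/-- Sign stability of the determinant. If `|det A| ≥ δ > 0` and the
perturbation `Δ` satisfies `d · ‖Δ‖ · (‖A‖ + ‖Δ‖)^(d−1) < δ`, then `det(A + Δ)` has the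
same sign as `det A`. -/
theorem stmt7 {d : ℕ}
    (A Δ : EuclideanSpace ℝ (Fin d) →L[ℝ] EuclideanSpace ℝ (Fin d))
    (δ : ℝ) (hδ : 0 < δ)
    (hA : δ ≤ |LinearMap.det A.toLinearMap|)
    (hΔ : d * ‖Δ‖ * (‖A‖ + ‖Δ‖) ^ (d - 1) < δ) :
    Real.sign (LinearMap.det ((A + Δ).toLinearMap)) =
      Real.sign (LinearMap.det A.toLinearMap) := by
  set b := (EuclideanSpace.basisFun (Fin d) ℝ).toBasis with hb
  set f := b.det.toMultilinearMap with hf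
  have hbnorm : ∀ i, ‖b i‖ = 1 := fun i => by
    simp [hb, (EuclideanSpace.basisFun (Fin d) ℝ).orthonormal.1 i]
  have Hbound : ∀ m : Fin d → EuclideanSpace ℝ (Fin d), ‖f m‖ ≤ 1 * ∏ i, ‖m i‖ := by
    intro m
    rw [one_mul]
    exact stmt7_hadamard m
  set m₁ : Fin d → EuclideanSpace ℝ (Fin d) := fun i => (A + Δ) (b i) with hm₁
  set m₂ : Fin d → EuclideanSpace ℝ (Fin d) := fun i => A (b i) with hm₂
  have key : ‖f m₁ - f m₂‖ ≤
      1 * Fintype.card (Fin d) * max ‖m₁‖ ‖m₂‖ ^ (Fintype.card (Fin d) - 1) * ‖m₁ - m₂‖ :=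
    f.norm_image_sub_le_of_bound zero_le_one Hbound m₁ m₂
  have hm₁n : ‖m₁‖ ≤ ‖A‖ + ‖Δ‖ := by
    rw [pi_norm_le_iff_of_nonneg (by positivity)]
    intro i
    calc ‖(A + Δ) (b i)‖ ≤ ‖A + Δ‖ * ‖b i‖ := (A + Δ).le_opNorm _
      _ ≤ (‖A‖ + ‖Δ‖) * 1 := by
          gcongr
          · exact norm_add_le _ _
          · exact (hbnorm i).le
      _ = ‖A‖ + ‖Δ‖ := mul_one _
  have hm₂n : ‖m₂‖ ≤ ‖A‖ + ‖Δ‖ := by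
    rw [pi_norm_le_iff_of_nonneg (by positivity)]
    intro i
    calc ‖A (b i)‖ ≤ ‖A‖ * ‖b i‖ := A.le_opNorm _
      _ ≤ (‖A‖ + ‖Δ‖) * 1 := by
          gcongr
          · exact le_add_of_nonneg_right (norm_nonneg _)
          · exact (hbnorm i).le
      _ = ‖A‖ + ‖Δ‖ := mul_one _
  have hdiff : ‖m₁ - m₂‖ ≤ ‖Δ‖ := by
    rw [pi_norm_le_iff_of_nonneg (norm_nonneg _)]
    intro i
    have : (m₁ - m₂) i = Δ (b i) := by
      simp [hm₁, hm₂]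
    rw [this]
    calc ‖Δ (b i)‖ ≤ ‖Δ‖ * ‖b i‖ := Δ.le_opNorm _
      _ = ‖Δ‖ := by rw [hbnorm i, mul_one]
  have key2 : ‖f m₁ - f m₂‖ < δ := by
    refine lt_of_le_of_lt (key.trans ?_) hΔ
    rw [one_mul, Fintype.card_fin]
    calc (d : ℝ) * max ‖m₁‖ ‖m₂‖ ^ (d - 1) * ‖m₁ - m₂‖
        ≤ (d : ℝ) * (‖A‖ + ‖Δ‖) ^ (d - 1) * ‖Δ‖ := by
          have h0 : (0:ℝ) ≤ max ‖m₁‖ ‖m₂‖ := le_max_of_le_left (norm_nonneg _)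
          have hmax : max ‖m₁‖ ‖m₂‖ ≤ ‖A‖ + ‖Δ‖ := max_le hm₁n hm₂n
          gcongr
      _ = d * ‖Δ‖ * (‖A‖ + ‖Δ‖) ^ (d - 1) := by ring
  have hfm₁ : f m₁ = LinearMap.det ((A + Δ).toLinearMap) := by
    have : f m₁ = b.det ((A + Δ).toLinearMap ∘ b) := rfl
    rw [this, Module.Basis.det_comp, Module.Basis.det_self, mul_one]
  have hfm₂ : f m₂ = LinearMap.det A.toLinearMap := by
    have : f m₂ = b.det (A.toLinearMap ∘ b) := rfl
    rw [this, Module.Basis.det_comp, Module.Basis.det_self, mul_one]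
  rw [hfm₁, hfm₂] at key2
  set x := LinearMap.det ((A + Δ).toLinearMap)
  set y := LinearMap.det A.toLinearMap
  have hyδ : δ ≤ |y| := hA
  have habs : |x - y| < δ := key2
  rcases abs_cases y with ⟨hy1, hy2⟩ | ⟨hy1, hy2⟩
  · have hypos : 0 < y := lt_of_lt_of_le hδ (hy1 ▸ hyδ)
    have hxpos : 0 < x := by
      have := abs_lt.mp habs
      linarith [hyδ, hy1]
    rw [Real.sign_of_pos hxpos, Real.sign_of_pos hypos]
  · have hyneg : y < 0 := hy2
    have hxneg : x < 0 := by
      have := abs_lt.mp habs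
      linarith [hyδ, hy1]
    rw [Real.sign_of_neg hxneg, Real.sign_of_neg hyneg]
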